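/- Suppose r : ℕ → ℝ≥0 satisfies Σ_{k≤N} r(k) = A·N·log N + O(N) for a constant A > 0. Then for h → 0⁺, Σ_{k > 1/h} r(k)/k³ · sin²(πhk) = O(h² log(1/h)). -/

import Mathlib

set_option maxHeartbeats 800000

open Real Filter

/-- Telescoping bound: sum of 1/m^2 over Ioc K N is at most 1/K. -/
lemma aux_sq_sum (K : ℕ) (hK : 1 ≤ K) :
    ∀ N : ℕ, ∑ m ∈ Finset.Ioc K N, (1:ℝ)/(m:ℝ)^2 ≤ 1/K - 1/(max K N : ℕ) := by
  intro N
  induction N with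
  | zero => simp [Nat.max_eq_left (by omega : 0 ≤ K), Finset.Ioc_eq_empty_of_le (by omega : (0:ℕ) ≤ K)]
  | succ N ih =>
    rcases le_or_gt (N+1) K with h | h
    · rw [Finset.Ioc_eq_empty_of_le (by omega), Nat.max_eq_left (by omega)]
      simp
    · have hKN : K ≤ N := by omega
      rw [Finset.sum_Ioc_succ_top hKN]
      have hmaxN : max K N = N := Nat.max_eq_right hKN
      have hmaxN1 : max K (N+1) = N+1 := Nat.max_eq_right (by omega)
      rw [hmaxN1]
      rw [hmaxN] at ih
      have hN1 : (1:ℝ) ≤ N := by exact_mod_cast le_trans hK hKN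
      have key : (1:ℝ)/((N:ℝ)+1)^2 ≤ 1/(N:ℝ) - 1/((N:ℝ)+1) := by
        rw [div_sub_div _ _ (by linarith) (by linarith)]
        rw [div_le_div_iff₀ (by positivity) (by positivity)]
        ring_nf
        nlinarith
      push_cast
      push_cast at ih
      linarith

/-- Tail bound via Abel summation. -/
lemma aux_tail (r : ℕ → ℝ) (hr : ∀ k, 0 ≤ r k) (A C : ℝ) (hA : 0 ≤ A) (hC : 0 ≤ C)
    (hS : ∀ N : ℕ, 1 ≤ N → (∑ k ∈ Finset.Icc 1 N, r k) ≤ A * N * Real.log N + C * N)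
    (K : ℕ) (hK : 1 ≤ K) (N : ℕ) :
    ∑ k ∈ Finset.Ioc K N, r k / (k:ℝ)^3 ≤ (8*A*Real.log K + 8*A + 8*C)/(K:ℝ)^2 := by
  set S : ℕ → ℝ := fun n => ∑ k ∈ Finset.Icc 1 n, r k with hSdef
  have hSnn : ∀ n, 0 ≤ S n := fun n => Finset.sum_nonneg (fun k _ => hr k)
  have hKR : (1:ℝ) ≤ K := by exact_mod_cast hK
  have hlogK : 0 ≤ Real.log K := Real.log_nonneg hKR
  have hlogle : ∀ u : ℝ, (K:ℝ) ≤ u → Real.log u ≤ Real.log K + u/K := by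
    intro u hu
    have hu0 : (0:ℝ) < u := by linarith
    have h1 : Real.log (u/(K:ℝ)) ≤ u/K - 1 := Real.log_le_sub_one_of_pos (by positivity)
    have h2 : Real.log (u/(K:ℝ)) = Real.log u - Real.log K :=
      Real.log_div (ne_of_gt hu0) (by positivity)
    linarith
  -- Abel summation claim
  have claim : ∀ M : ℕ, K ≤ M →
      (∑ k ∈ Finset.Ioc K M, r k / (k:ℝ)^3) ≤
      (∑ m ∈ Finset.Ioc K M, S m * (1/(m:ℝ)^3 - 1/((m:ℝ)+1)^3)) + S M / ((M:ℝ)+1)^3 := by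
    intro M hM
    induction M, hM using Nat.le_induction with
    | base =>
      rw [Finset.Ioc_self, Finset.sum_empty, Finset.sum_empty]
      have := hSnn K
      positivity
    | succ M hM ih =>
      rw [Finset.sum_Ioc_succ_top hM, Finset.sum_Ioc_succ_top hM]
      have hrec : S (M+1) = S M + r (M+1) := by
        simp only [hSdef]
        exact Finset.sum_Icc_succ_top (by omega) r
      have hM1 : (1:ℝ) ≤ (M:ℝ) := by
        have : 1 ≤ M := le_trans hK hM
        exact_mod_cast this
      have hid : S (M+1) * (1/((M:ℝ)+1)^3 - 1/(((M:ℝ)+1)+1)^3) + S (M+1)/(((M:ℝ)+1)+1)^3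
          = S (M+1) / ((M:ℝ)+1)^3 := by ring
      push_cast
      push_cast at ih hid
      have hstep : r (M+1) / ((M:ℝ)+1)^3 + S M / ((M:ℝ)+1)^3 = S (M+1) / ((M:ℝ)+1)^3 := by
        rw [hrec]; ring
      linarith
  -- reduce to M = max K N
  set M := max K N with hM
  have hsub : ∑ k ∈ Finset.Ioc K N, r k / (k:ℝ)^3 ≤ ∑ k ∈ Finset.Ioc K M, r k / (k:ℝ)^3 := by
    apply Finset.sum_le_sum_of_subset_of_nonneg
    · apply Finset.Ioc_subset_Ioc le_rfl (le_max_right K N)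
    · intro i _ _
      have hi0 : (0:ℝ) ≤ (i:ℝ)^3 := by positivity
      exact div_nonneg (hr i) hi0
  have hKM : K ≤ M := le_max_left K N
  -- bound the Abel sum termwise
  set Q : ℝ := 7*A*Real.log K + 7*A + 7*C with hQ
  have hQnn : 0 ≤ Q := by
    have := mul_nonneg (mul_nonneg (by norm_num : (0:ℝ) ≤ 7) hA) hlogK
    simp only [hQ]; nlinarith
  have hterm : ∀ m ∈ Finset.Ioc K M, S m * (1/(m:ℝ)^3 - 1/((m:ℝ)+1)^3)
      ≤ (Q/(K:ℝ)) * (1/(m:ℝ)^2) := by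
    intro m hm
    rw [Finset.mem_Ioc] at hm
    have hm1 : 1 ≤ m := le_trans hK (le_of_lt hm.1)
    have hu1 : (1:ℝ) ≤ (m:ℝ) := by exact_mod_cast hm1
    have huK : (K:ℝ) ≤ (m:ℝ) := by exact_mod_cast le_of_lt hm.1
    have hu0 : (0:ℝ) < (m:ℝ) := by linarith
    have hlogm : 0 ≤ Real.log m := Real.log_nonneg hu1
    have hd0 : 0 ≤ 1/(m:ℝ)^3 - 1/((m:ℝ)+1)^3 := by
      rw [sub_nonneg, div_le_div_iff₀ (by positivity) (by positivity)]
      nlinarith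
    have hd7 : 1/(m:ℝ)^3 - 1/((m:ℝ)+1)^3 ≤ 7/(m:ℝ)^4 := by
      rw [div_sub_div _ _ (by positivity) (by positivity),
        div_le_div_iff₀ (by positivity) (by positivity)]
      have h4 : (m:ℝ)^4 ≤ (m:ℝ)^6 := pow_le_pow_right₀ hu1 (by norm_num)
      have h5 : (m:ℝ)^5 ≤ (m:ℝ)^6 := pow_le_pow_right₀ hu1 (by norm_num)
      nlinarith [pow_nonneg hu0.le 3, pow_nonneg hu0.le 6, sq_nonneg ((m:ℝ))]
    have hSb : S m ≤ A*(m:ℝ)*Real.log m + C*(m:ℝ) := hS m hm1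
    have hfac : S m * (1/(m:ℝ)^3 - 1/((m:ℝ)+1)^3)
        ≤ (A*(m:ℝ)*Real.log m + C*(m:ℝ)) * (7/(m:ℝ)^4) := by
      apply mul_le_mul hSb hd7 hd0
      have := mul_nonneg (mul_nonneg hA (le_of_lt hu0)) hlogm
      nlinarith
    refine le_trans hfac ?_
    rw [show (A*(m:ℝ)*Real.log m + C*(m:ℝ)) * (7/(m:ℝ)^4)
        = ((A*(m:ℝ)*Real.log m + C*(m:ℝ))*7)/(m:ℝ)^4 from by ring,
      div_mul_div_comm, mul_one, div_le_div_iff₀ (by positivity) (by positivity)]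
    have hlm := hlogle (m:ℝ) huK
    have hK0 : (0:ℝ) < K := by linarith
    have h5 : (A*(m:ℝ)*(K:ℝ))*Real.log m ≤ A*(m:ℝ)*(K:ℝ)*Real.log K + A*(m:ℝ)^2 := by
      have h := mul_le_mul_of_nonneg_left hlm
        (mul_nonneg (mul_nonneg hA hu0.le) hK0.le)
      have he : (A*(m:ℝ)*(K:ℝ))*(Real.log K + (m:ℝ)/(K:ℝ))
          = A*(m:ℝ)*(K:ℝ)*Real.log K + A*(m:ℝ)^2 := by field_simp
      linarith [he ▸ h]
    have h6 := mul_le_mul_of_nonneg_right h5 (by positivity : (0:ℝ) ≤ 7*(m:ℝ)^2)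
    have h3 : (K:ℝ)*(m:ℝ)^3 ≤ (m:ℝ)^4 := by
      nlinarith [mul_le_mul_of_nonneg_right huK (pow_nonneg hu0.le 3)]
    have h7 := mul_le_mul_of_nonneg_left h3 (mul_nonneg hA hlogK)
    have h8 := mul_le_mul_of_nonneg_left h3 hC
    simp only [hQ]
    nlinarith [h6, h7, h8]
  have habel : ∑ m ∈ Finset.Ioc K M, S m * (1/(m:ℝ)^3 - 1/((m:ℝ)+1)^3) ≤ Q/(K:ℝ)^2 := by
    calc ∑ m ∈ Finset.Ioc K M, S m * (1/(m:ℝ)^3 - 1/((m:ℝ)+1)^3)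
        ≤ ∑ m ∈ Finset.Ioc K M, (Q/(K:ℝ)) * (1/(m:ℝ)^2) := Finset.sum_le_sum hterm
      _ = (Q/(K:ℝ)) * ∑ m ∈ Finset.Ioc K M, (1:ℝ)/(m:ℝ)^2 := by rw [Finset.mul_sum]
      _ ≤ (Q/(K:ℝ)) * (1/(K:ℝ)) := by
          apply mul_le_mul_of_nonneg_left _ (by positivity)
          have := aux_sq_sum K hK M
          have h2 : (0:ℝ) ≤ 1/(max K M : ℕ) := by positivity
          linarith
      _ = Q/(K:ℝ)^2 := by rw [div_mul_div_comm, mul_one]; ring_nf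
  -- boundary term
  have hbnd : S M / ((M:ℝ)+1)^3 ≤ (A*Real.log K + A + C)/(K:ℝ)^2 := by
    have hM1 : 1 ≤ M := le_trans hK hKM
    have hu1 : (1:ℝ) ≤ (M:ℝ) := by exact_mod_cast hM1
    have huK : (K:ℝ) ≤ (M:ℝ) := by exact_mod_cast hKM
    have hu0 : (0:ℝ) < (M:ℝ) := by linarith
    have hlogM : 0 ≤ Real.log M := Real.log_nonneg hu1
    have h1 : S M / ((M:ℝ)+1)^3 ≤ S M / (M:ℝ)^3 := by
      apply div_le_div_of_nonneg_left (hSnn M) (by positivity)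
      nlinarith
    refine le_trans h1 ?_
    have hSb : S M ≤ A*(M:ℝ)*Real.log M + C*(M:ℝ) := hS M hM1
    have hnum : 0 ≤ A*(M:ℝ)*Real.log M + C*(M:ℝ) := by
      have := mul_nonneg (mul_nonneg hA hu0.le) hlogM
      nlinarith
    have h2 : (A*(M:ℝ)*Real.log M + C*(M:ℝ)) / (M:ℝ)^3
        ≤ (A*Real.log K + A + C)/(K:ℝ)^2 := by
      rw [div_le_div_iff₀ (by positivity) (by positivity)]
      have hlm := hlogle (M:ℝ) huK
      have hK0 : (0:ℝ) < K := by linarith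
      have h5 : (A*(M:ℝ)*(K:ℝ))*Real.log M ≤ A*(M:ℝ)*(K:ℝ)*Real.log K + A*(M:ℝ)^2 := by
        have h := mul_le_mul_of_nonneg_left hlm
          (mul_nonneg (mul_nonneg hA hu0.le) hK0.le)
        have he : (A*(M:ℝ)*(K:ℝ))*(Real.log K + (M:ℝ)/(K:ℝ))
            = A*(M:ℝ)*(K:ℝ)*Real.log K + A*(M:ℝ)^2 := by field_simp
        rw [he] at h; linarith
      have h6 := mul_le_mul_of_nonneg_right h5 hK0.le
      have h3 : (K:ℝ)^2*(M:ℝ) ≤ (M:ℝ)^3 := by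
        nlinarith [mul_le_mul_of_nonneg_right
          (mul_le_mul huK huK hK0.le hu0.le) hu0.le]
      have h4 : (K:ℝ)*(M:ℝ)^2 ≤ (M:ℝ)^3 := by
        nlinarith [mul_le_mul_of_nonneg_right huK (sq_nonneg (M:ℝ))]
      have h7 := mul_le_mul_of_nonneg_left h3 (mul_nonneg hA hlogK)
      have h8 := mul_le_mul_of_nonneg_left h4 hA
      have h9 := mul_le_mul_of_nonneg_left h3 hC
      nlinarith [h6, h7, h8, h9]
    calc S M / (M:ℝ)^3 ≤ (A*(M:ℝ)*Real.log M + C*(M:ℝ)) / (M:ℝ)^3 := by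
          gcongr
      _ ≤ (A*Real.log K + A + C)/(K:ℝ)^2 := h2
  calc ∑ k ∈ Finset.Ioc K N, r k / (k:ℝ)^3
      ≤ ∑ k ∈ Finset.Ioc K M, r k / (k:ℝ)^3 := hsub
    _ ≤ (∑ m ∈ Finset.Ioc K M, S m * (1/(m:ℝ)^3 - 1/((m:ℝ)+1)^3)) + S M / ((M:ℝ)+1)^3 :=
        claim M hKM
    _ ≤ Q/(K:ℝ)^2 + (A*Real.log K + A + C)/(K:ℝ)^2 := add_le_add habel hbnd
    _ = (8*A*Real.log K + 8*A + 8*C)/(K:ℝ)^2 := by rw [hQ, ← add_div]; ring_nf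

theorem stmt_12 (r : ℕ → ℝ) (hr : ∀ k, 0 ≤ r k) (A : ℝ) (hA : 0 < A)
    (hsum : ∃ C : ℝ, ∀ N : ℕ, 1 ≤ N →
      |(∑ k ∈ Finset.Icc 1 N, r k) - A * N * Real.log N| ≤ C * N) :
    ∃ C > (0 : ℝ), ∀ᶠ h : ℝ in nhdsWithin 0 (Set.Ioi 0),
      |∑' k : ℕ, (if (1 / h : ℝ) < k then r k / (k : ℝ) ^ 3 * Real.sin (π * h * k) ^ 2 else 0)| ≤
        C * h ^ 2 * Real.log (1 / h) := by
  obtain ⟨C, hC⟩ := hsum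
  have hC0 : 0 ≤ C := by
    have h1 := hC 1 le_rfl
    simp [Finset.Icc_self, Real.log_one] at h1
    exact le_trans (abs_nonneg _) h1
  have hS : ∀ N : ℕ, 1 ≤ N → (∑ k ∈ Finset.Icc 1 N, r k) ≤ A*N*Real.log N + C*N := by
    intro N hN
    have := abs_le.1 (hC N hN)
    linarith [this.2]
  refine ⟨64*A + 32*C + 1, by positivity, ?_⟩
  have hmem : Set.Ioo (0:ℝ) (Real.exp (-1)) ∈ nhdsWithin 0 (Set.Ioi 0) :=
    Ioo_mem_nhdsGT_of_mem ⟨le_rfl, Real.exp_pos _⟩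
  filter_upwards [hmem] with h hh
  obtain ⟨h0, hlt⟩ := hh
  set x : ℝ := 1/h with hxdef
  have hx0 : 0 < x := by positivity
  have hxe : Real.exp 1 < x := by
    have h1 : 1/Real.exp (-1) < 1/h := one_div_lt_one_div_of_lt h0 hlt
    rwa [Real.exp_neg, one_div, inv_inv] at h1
  have he2 : (2:ℝ) < Real.exp 1 := by
    have := Real.exp_one_gt_d9; linarith
  have hx2 : (2:ℝ) < x := lt_trans he2 hxe
  set K : ℕ := ⌊x⌋₊ with hKdef
  have hK2 : 2 ≤ K := Nat.le_floor (by exact_mod_cast hx2.le)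
  have hK1 : 1 ≤ K := by omega
  have hKx : (K:ℝ) ≤ x := Nat.floor_le hx0.le
  have hKlb : x - 1 < (K:ℝ) := Nat.sub_one_lt_floor x
  have hK0 : (0:ℝ) < K := by
    have : (1:ℝ) ≤ K := by exact_mod_cast hK1
    linarith
  have hinvK : 1/(K:ℝ) ≤ 2*h := by
    have hhalf : x/2 ≤ (K:ℝ) := by linarith
    have h1 : 1/(K:ℝ) ≤ 1/(x/2) := one_div_le_one_div_of_le (by linarith) hhalf
    have h2 : 1/(x/2) = 2*h := by
      rw [hxdef]; field_simp
    linarith [h2 ▸ h1]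
  have hlogKx : Real.log K ≤ Real.log x := Real.log_le_log hK0 hKx
  have hlogK0 : 0 ≤ Real.log K := Real.log_nonneg (by exact_mod_cast hK1)
  have hlogx1 : 1 ≤ Real.log x := by
    rw [show (1:ℝ) = Real.log (Real.exp 1) from (Real.log_exp 1).symm]
    exact Real.log_le_log (Real.exp_pos 1) hxe.le
  -- the comparison series
  set F : ℕ → ℝ := fun k => if K < k then r k / (k:ℝ)^3 else 0 with hFdef
  have hFnn : ∀ k, 0 ≤ F k := by
    intro k
    simp only [hFdef]
    split
    · exact div_nonneg (hr k) (by positivity)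
    · exact le_rfl
  set B : ℝ := (8*A*Real.log K + 8*A + 8*C)/(K:ℝ)^2 with hBdef
  have hrange : ∀ n : ℕ, ∑ i ∈ Finset.range n, F i ≤ B := by
    intro n
    have he : ∑ i ∈ Finset.range n, F i
        = ∑ i ∈ (Finset.range n).filter (fun i => K < i), r i / (i:ℝ)^3 :=
      (Finset.sum_filter _ _).symm
    rw [he]
    refine le_trans (Finset.sum_le_sum_of_subset_of_nonneg ?_ ?_)
      (aux_tail r hr A C hA.le hC0 hS K hK1 n)
    · intro i hi
      simp only [Finset.mem_filter, Finset.mem_range] at hi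
      simp only [Finset.mem_Ioc]
      omega
    · intro i _ _
      exact div_nonneg (hr i) (by positivity)
  have hFsum : Summable F := summable_of_sum_range_le hFnn hrange
  have hFt : ∑' k, F k ≤ B := Summable.tsum_le_of_sum_range_le hFsum hrange
  set G : ℕ → ℝ := fun k =>
    if (1/h : ℝ) < k then r k / (k:ℝ)^3 * Real.sin (π*h*k)^2 else 0 with hGdef
  have hGnn : ∀ k, 0 ≤ G k := by
    intro k
    simp only [hGdef]
    split
    · exact mul_nonneg (div_nonneg (hr k) (by positivity)) (sq_nonneg _)
    · exact le_rfl
  have hGle : ∀ k, G k ≤ F k := by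
    intro k
    simp only [hGdef, hFdef]
    have hcond : ((1/h : ℝ) < (k:ℝ)) ↔ K < k := (Nat.floor_lt hx0.le).symm
    by_cases hk : (1/h : ℝ) < (k:ℝ)
    · rw [if_pos hk, if_pos (hcond.1 hk)]
      have : r k / (k:ℝ)^3 * Real.sin (π*h*k)^2 ≤ r k / (k:ℝ)^3 * 1 :=
        mul_le_mul_of_nonneg_left (Real.sin_sq_le_one _)
          (div_nonneg (hr k) (by positivity))
      linarith
    · rw [if_neg hk, if_neg (fun hc => hk (hcond.2 hc))]
  have hGsum : Summable G := Summable.of_nonneg_of_le hGnn hGle hFsum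
  have hGt : ∑' k, G k ≤ B := le_trans (Summable.tsum_le_tsum hGle hGsum hFsum) hFt
  have habs : |∑' k, G k| = ∑' k, G k := abs_of_nonneg (tsum_nonneg hGnn)
  -- bound B
  have hBle : B ≤ (64*A + 32*C + 1) * h^2 * Real.log x := by
    have h1 : 8*A*Real.log K + 8*A + 8*C ≤ (16*A + 8*C)*Real.log x := by
      nlinarith [mul_le_mul_of_nonneg_left hlogKx (by linarith : (0:ℝ) ≤ 8*A)]
    have h2 : 1/(K:ℝ)^2 ≤ 4*h^2 := by
      have hm := mul_le_mul hinvK hinvK (by positivity) (by positivity : (0:ℝ) ≤ 2*h)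
      calc 1/(K:ℝ)^2 = (1/(K:ℝ))*(1/(K:ℝ)) := by ring
        _ ≤ (2*h)*(2*h) := hm
        _ = 4*h^2 := by ring
    have hnum : 0 ≤ 8*A*Real.log K + 8*A + 8*C := by nlinarith
    have h3 : B ≤ ((16*A + 8*C)*Real.log x) * (4*h^2) := by
      rw [hBdef, div_eq_mul_one_div]
      exact mul_le_mul h1 h2 (by positivity) (by nlinarith)
    nlinarith [mul_pos (mul_pos (by positivity : (0:ℝ) < h^2)
      (by linarith : (0:ℝ) < Real.log x)) (by positivity : (0:ℝ) < (1:ℝ))]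
  calc |∑' k, G k| = ∑' k, G k := habs
    _ ≤ B := hGt
    _ ≤ (64*A + 32*C + 1) * h^2 * Real.log x := hBle
    _ = (64*A + 32*C + 1) * h^2 * Real.log (1/h) := by rw [hxdef]
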